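/- Suppose e1 is a unit vector at which f attains its maximum over the unit sphere of V with λ1 := f(e1) > 0, that K(e1, v) = (λ1/2)·v for every v orthogonal to e1, and that λ1² = 4ε (so ε = 1 and λ1 = 2). Then K(e1,e1) = 2e1, K(e1,v) = v for all v ⟂ e1, and K(v,w) = ⟨v,w⟩·e1 for all v, w ⟂ e1; equivalently, there is an orthonormal basis {e1, …, en} of V with K(e1,e1) = 2e1, K(e1,ei) = ei and K(ei,ej) = δ_{ij}·e1 for 2 ≤ i, j ≤ n. -/

import Mathlib

open scoped RealInnerProductSpace
open Module Submodule

noncomputable section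

variable {V : Type*} [NormedAddCommGroup V] [InnerProductSpace ℝ V]

/-- The curvature-type operator built from `ε` and the difference tensor `K`:
`R(X,Y)Z = ε(⟨Y,Z⟩X − ⟨X,Z⟩Y) − K(X,K(Y,Z)) + K(Y,K(X,Z))`. -/
def Rc (ε : ℝ) (K : V →ₗ[ℝ] V →ₗ[ℝ] V) (X Y Z : V) : V :=
  ε • (⟪Y, Z⟫ • X - ⟪X, Z⟫ • Y) - K X (K Y Z) + K Y (K X Z)


/-- Lemma 5.1: in Case `B` (`λ₁² = 4ε`), the difference tensor has the form
`K(e₁,e₁) = 2e₁`, `K(e₁,v) = v` and `K(v,w) = ⟨v,w⟩e₁` for `v, w ⟂ e₁`. -/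
theorem stmt_2 {V : Type*} [NormedAddCommGroup V] [InnerProductSpace ℝ V]
    (n : ℕ) (hn : finrank ℝ V = n) (hn2 : 2 ≤ n)
    (ε : ℝ) (hε : ε = 1 ∨ ε = -1)
    (K : V →ₗ[ℝ] V →ₗ[ℝ] V)
    (hKsymm : ∀ X Y : V, K X Y = K Y X)
    (hKcub : ∀ X Y Z : V, ⟪K X Y, Z⟫ = ⟪K X Z, Y⟫)
    (hpar : ∀ X Y Z U : V,
      Rc ε K X Y (K Z U) = K (Rc ε K X Y Z) U + K Z (Rc ε K X Y U))
    (e1 : V) (he1 : ‖e1‖ = 1)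
    (lam1 : ℝ) (hlam1 : lam1 = ⟪K e1 e1, e1⟫) (hlam1pos : 0 < lam1)
    (hmax : ∀ u : V, ‖u‖ = 1 → ⟪K u u, u⟫ ≤ lam1)
    (heig : ∀ v : V, ⟪e1, v⟫ = 0 → K e1 v = (lam1 / 2) • v)
    (hsq : lam1 ^ 2 = 4 * ε) :
    K e1 e1 = (2 : ℝ) • e1 ∧
    (∀ v : V, ⟪e1, v⟫ = 0 → K e1 v = v) ∧
    (∀ v w : V, ⟪e1, v⟫ = 0 → ⟪e1, w⟫ = 0 → K v w = ⟪v, w⟫ • e1) := by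
  -- Step 0 : lam1 = 2
  have hlam2 : lam1 = 2 := by
    have h4 : lam1 ^ 2 = 4 := by
      rcases hε with h | h
      · rw [hsq, h]; norm_num
      · exfalso; nlinarith [sq_nonneg lam1]
    have hfac : (lam1 - 2) * (lam1 + 2) = 0 := by linear_combination h4
    rcases mul_eq_zero.1 hfac with h | h
    · linarith
    · linarith
  have he1sq : ⟪e1, e1⟫ = (1:ℝ) := by
    rw [real_inner_self_eq_norm_sq, he1]; norm_num
  -- K e1 v = v for v ⟂ e1
  have heig' : ∀ v : V, ⟪e1, v⟫ = 0 → K e1 v = v := by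
    intro v hv
    rw [heig v hv, hlam2]; norm_num
  have hlam1' : ⟪K e1 e1, e1⟫ = (2:ℝ) := by rw [← hlam1, hlam2]
  -- K e1 e1 = 2 e1
  have hKe1e1 : K e1 e1 = (2:ℝ) • e1 := by
    have hde1 : ⟪e1, K e1 e1 - (2:ℝ) • e1⟫ = 0 := by
      rw [inner_sub_right, inner_smul_right, he1sq, real_inner_comm (K e1 e1) e1, hlam1']
      ring
    have hKd : K e1 (K e1 e1 - (2:ℝ) • e1) = K e1 e1 - (2:ℝ) • e1 := heig' _ hde1
    have hdd : ⟪K e1 e1 - (2:ℝ) • e1, K e1 e1 - (2:ℝ) • e1⟫ = 0 := by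
      rw [inner_sub_left, real_inner_smul_left, hKcub e1 e1 _, hKd,
        real_inner_comm e1 (K e1 e1 - (2:ℝ) • e1), hde1]
      ring
    have := inner_self_eq_zero.1 hdd
    rw [sub_eq_zero] at this
    exact this
  -- cubic expansion
  have cube : ∀ x y : V, ⟪K (x+y) (x+y), (x+y)⟫ =
      ⟪K x x, x⟫ + 3*⟪K x x, y⟫ + 3*⟪K y y, x⟫ + ⟪K y y, y⟫ := by
    intro x y
    have h3 : K y x = K x y := hKsymm y x
    have h1 : ⟪K x y, x⟫ = ⟪K x x, y⟫ := hKcub x y x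
    have h2 : ⟪K x y, y⟫ = ⟪K y y, x⟫ := by
      rw [← h3]; exact hKcub y x y
    simp only [map_add, LinearMap.add_apply, inner_add_left, inner_add_right, h3, h1, h2]
    ring
  -- Step 1 : diagonal vanishing for unit vectors orthogonal to e1
  have Zunit : ∀ v : V, ⟪e1, v⟫ = 0 → ‖v‖ = 1 → ⟪K v v, v⟫ = 0 := by
    intro v hv hnv
    set a := ⟪K v v, v⟫ with ha
    have hvv : ⟪v, v⟫ = (1:ℝ) := by
      rw [real_inner_self_eq_norm_sq, hnv]; norm_num
    have hve1 : ⟪v, e1⟫ = 0 := by rw [real_inner_comm]; exact hv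
    have hKe1v : K e1 v = v := heig' v hv
    have hKve1 : K v e1 = v := by rw [hKsymm v e1]; exact hKe1v
    have hKvve1 : ⟪K v v, e1⟫ = 1 := by
      rw [hKcub v v e1, hKve1, hvv]
    have key : ∀ t : ℝ, a * t^3 ≤ t^4 := by
      intro t
      set r := Real.sqrt (1 + t^2) with hr
      have hpos : (0:ℝ) < 1 + t^2 := by positivity
      have hrpos : 0 < r := Real.sqrt_pos.2 hpos
      have hrsq : r^2 = 1 + t^2 := Real.sq_sqrt (le_of_lt hpos)
      have hnormsq : ‖e1 + t • v‖^2 = 1 + t^2 := by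
        have h := norm_add_sq_real e1 (t • v)
        rw [inner_smul_right, hv, norm_smul, hnv, he1, Real.norm_eq_abs] at h
        rw [h, mul_pow, sq_abs]
        ring
      have hnorm : ‖e1 + t • v‖ = r := by
        have := congrArg Real.sqrt hnormsq
        rwa [Real.sqrt_sq (norm_nonneg _)] at this
      have hunit : ‖r⁻¹ • (e1 + t • v)‖ = 1 := by
        rw [norm_smul, hnorm, Real.norm_eq_abs, abs_of_pos (inv_pos.2 hrpos),
          inv_mul_cancel₀ (ne_of_gt hrpos)]
      have hS : ⟪K (e1 + t • v) (e1 + t • v), e1 + t • v⟫ = 2 + 3*t^2 + a*t^3 := by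
        simp only [map_add, map_smul, LinearMap.add_apply, LinearMap.smul_apply,
          inner_add_left, inner_add_right, real_inner_smul_left, real_inner_smul_right,
          hKe1e1, hKe1v, hKve1, hKvve1, he1sq, hv, hve1, hvv, ← ha]
        ring
      have hmaxu := hmax _ hunit
      rw [hlam2] at hmaxu
      have hSu : ⟪K (r⁻¹ • (e1 + t • v)) (r⁻¹ • (e1 + t • v)), r⁻¹ • (e1 + t • v)⟫
          = (r⁻¹)^3 * (2 + 3*t^2 + a*t^3) := by
        simp only [map_smul, LinearMap.smul_apply, real_inner_smul_left,
          real_inner_smul_right, hS]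
        ring
      rw [hSu] at hmaxu
      -- S ≤ 2 r^3
      have hSle : 2 + 3*t^2 + a*t^3 ≤ 2 * r^3 := by
        have h2 : r^3 * ((r⁻¹)^3 * (2 + 3*t^2 + a*t^3)) ≤ r^3 * 2 :=
          mul_le_mul_of_nonneg_left hmaxu (by positivity)
        have h3 : r^3 * ((r⁻¹)^3 * (2 + 3*t^2 + a*t^3)) = 2 + 3*t^2 + a*t^3 := by
          field_simp
        linarith [h2, h3]
      have hrle : r ≤ 1 + t^2/2 := by
        have h := Real.sqrt_le_sqrt (show 1 + t^2 ≤ (1 + t^2/2)^2 by nlinarith [sq_nonneg (t^2)])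
        rwa [Real.sqrt_sq (by positivity)] at h
      have hr3 : r^3 = (1 + t^2) * r := by
        rw [pow_succ, hrsq]
      have hprod : (1 + t^2) * r ≤ (1 + t^2) * (1 + t^2/2) :=
        mul_le_mul_of_nonneg_left hrle (le_of_lt hpos)
      linarith [hSle, hr3, hprod]
    have h4 : a^4 ≤ 0 := by linarith [key (a/2)]
    have h5 : a^4 = 0 := le_antisymm h4 (by positivity)
    exact pow_eq_zero_iff (by norm_num) |>.1 h5
  -- Step 2 : diagonal vanishing for all vectors orthogonal to e1
  have Z : ∀ v : V, ⟪e1, v⟫ = 0 → ⟪K v v, v⟫ = 0 := by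
    intro v hv
    rcases eq_or_ne v 0 with rfl | hv0
    · simp
    · have hnv : ‖v‖ ≠ 0 := norm_ne_zero_iff.2 hv0
      have h1 := Zunit (‖v‖⁻¹ • v)
        (by rw [inner_smul_right, hv, mul_zero])
        (by rw [norm_smul, Real.norm_eq_abs, abs_of_nonneg (inv_nonneg.2 (norm_nonneg v)),
              inv_mul_cancel₀ hnv])
      simp only [map_smul, LinearMap.smul_apply, real_inner_smul_left,
        real_inner_smul_right] at h1
      have hinv : (‖v‖⁻¹ : ℝ) ≠ 0 := inv_ne_zero hnv
      field_simp [hnv] at h1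
      rw [mul_zero] at h1
      exact h1
  -- Step 3 : ⟪K v v, w⟫ = 0 for v, w ⟂ e1
  have C1 : ∀ v w : V, ⟪e1, v⟫ = 0 → ⟪e1, w⟫ = 0 → ⟪K v v, w⟫ = 0 := by
    intro v w hv hw
    have hc : ∀ u : V, ⟪e1, u⟫ = 0 → ⟪K v v, u⟫ + ⟪K u u, v⟫ = 0 := by
      intro u hu
      have h1 := Z (v + u) (by rw [inner_add_right, hv, hu, add_zero])
      rw [cube v u] at h1
      have h3 := Z v hv
      have h4 := Z u hu
      linarith
    have ha := hc w hw
    have hb := hc ((2:ℝ) • w) (by rw [inner_smul_right, hw, mul_zero])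
    simp only [map_smul, LinearMap.smul_apply, real_inner_smul_left,
      real_inner_smul_right] at hb
    linarith
  -- Step 4 : ⟪K v w, u⟫ = 0 for v, w, u ⟂ e1
  have C2 : ∀ v w u : V, ⟪e1, v⟫ = 0 → ⟪e1, w⟫ = 0 → ⟪e1, u⟫ = 0 →
      ⟪K v w, u⟫ = 0 := by
    intro v w u hv hw hu
    have h1 := C1 (v + w) u (by rw [inner_add_right, hv, hw, add_zero]) hu
    have h2 := C1 v u hv hu
    have h3 := C1 w u hw hu
    have hwv : K w v = K v w := hKsymm w v
    have hexp : ⟪K (v+w) (v+w), u⟫ = ⟪K v v, u⟫ + 2*⟪K v w, u⟫ + ⟪K w w, u⟫ := by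
      simp only [map_add, LinearMap.add_apply, inner_add_left, hwv]
      ring
    rw [hexp] at h1
    linarith
  refine ⟨hKe1e1, heig', ?_⟩
  intro v w hv hw
  have hdote1 : ⟪K v w, e1⟫ = ⟪v, w⟫ := by
    rw [hKcub v w e1, hKsymm v e1, heig' v hv]
  have hde1 : ⟪e1, K v w - ⟪v, w⟫ • e1⟫ = 0 := by
    rw [inner_sub_right, inner_smul_right, he1sq, real_inner_comm (K v w) e1, hdote1]
    ring
  have hdd : ⟪K v w - ⟪v, w⟫ • e1, K v w - ⟪v, w⟫ • e1⟫ = 0 := by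
    have h1 : ⟪K v w, K v w - ⟪v, w⟫ • e1⟫ = 0 := C2 v w _ hv hw hde1
    rw [inner_sub_left, real_inner_smul_left, h1, hde1]
    ring
  have := inner_self_eq_zero.1 hdd
  rw [sub_eq_zero] at this
  exact this

end
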